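/- Let r ≥ 1, let g₀ ∈ ℂ, let g : Fin r → ℂ satisfy gⱼ ≠ g₀ for all j, and let q : Fin r → ℝ satisfy ∑ⱼ qⱼ = 0 and ∑ⱼ qⱼ/(gⱼ − g₀) = 0. For each j set vⱼ := qⱼ • Im W(g₀, gⱼ) ∈ ℝ³, where W(g₀, gⱼ) := (gⱼ − g₀)⁻¹ • (1 − g₀gⱼ, √(−1)(1 + g₀gⱼ), g₀ + gⱼ) ∈ ℂ³ and Im denotes the componentwise imaginary part. Then ∑ⱼ vⱼ = 0, and ⟨vⱼ, n(g₀)⟩ = 0 for every j, where n(z) := (1 + |z|²)⁻¹ • (2 Re z, 2 Im z, |z|² − 1) ∈ ℝ³. -/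

import Mathlib

open scoped RealInnerProductSpace

/-- The vector `(x, y, z)` in Euclidean 3-space. -/
noncomputable def e3 (x y z : ℝ) : EuclideanSpace ℝ (Fin 3) :=
  (WithLp.equiv 2 _).symm ![x, y, z]

/-- The cross product in Euclidean 3-space. -/
noncomputable def cross3 (a b : EuclideanSpace ℝ (Fin 3)) : EuclideanSpace ℝ (Fin 3) :=
  e3 (a 1 * b 2 - a 2 * b 1) (a 2 * b 0 - a 0 * b 2) (a 0 * b 1 - a 1 * b 0)

/-- Inverse stereographic projection `n(z) = (1 + |z|²)⁻¹ (2 Re z, 2 Im z, |z|² - 1)`. -/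
noncomputable def invStereo (z : ℂ) : EuclideanSpace ℝ (Fin 3) :=
  (1 + ‖z‖ ^ 2)⁻¹ • e3 (2 * z.re) (2 * z.im) (‖z‖ ^ 2 - 1)

/-- The Weierstrass edge vector `W = (gⱼ - gᵢ)⁻¹ • (1 - gᵢgⱼ, √(-1)(1 + gᵢgⱼ), gᵢ + gⱼ) ∈ ℂ³`. -/
noncomputable def wVec (gi gj : ℂ) : Fin 3 → ℂ :=
  (gj - gi)⁻¹ • ![1 - gi * gj, Complex.I * (1 + gi * gj), gi + gj]

/-- Componentwise imaginary part of a vector in ℂ³, as a vector in ℝ³. -/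
noncomputable def imVec (W : Fin 3 → ℂ) : EuclideanSpace ℝ (Fin 3) :=
  e3 (W 0).im (W 1).im (W 2).im

/-- Componentwise real part of a vector in ℂ³, as a vector in ℝ³. -/
noncomputable def reVec (W : Fin 3 → ℂ) : EuclideanSpace ℝ (Fin 3) :=
  e3 (W 0).re (W 1).re (W 2).re

private lemma ortho_key (a b u : ℂ) (h : u * (b - a) = 1) :
    2 * a.re * (u * (1 - a * b)).im + 2 * a.im * (u * (Complex.I * (1 + a * b))).im
      + (a.re ^ 2 + a.im ^ 2 - 1) * (u * (a + b)).im = 0 := by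
  have him : (u * (b - a)).im = 0 := by rw [h]; simp
  simp only [Complex.mul_im, Complex.mul_re, Complex.sub_re, Complex.sub_im,
    Complex.add_re, Complex.add_im, Complex.one_re, Complex.one_im, Complex.I_re,
    Complex.I_im] at him ⊢
  linear_combination (-(1 + a.re ^ 2 + a.im ^ 2)) * him

/-- Local content of the discrete Weierstrass representation: the edge vectors
`vⱼ := qⱼ • Im W(g₀, gⱼ)` of the dual face close up and lie in the plane orthogonal to
the unit normal `n(g₀)`. -/
theorem stmt_4 (r : ℕ) (hr : 1 ≤ r) (g₀ : ℂ) (g : Fin r → ℂ) (hg : ∀ j, g j ≠ g₀)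
    (q : Fin r → ℝ)
    (hq1 : ∑ j, q j = 0) (hq2 : ∑ j, (q j : ℂ) / (g j - g₀) = 0)
    (v : Fin r → EuclideanSpace ℝ (Fin 3))
    (hv : ∀ j, v j = q j • imVec (wVec g₀ (g j))) :
    (∑ j, v j = 0) ∧ ∀ j, ⟪v j, invStereo g₀⟫ = 0 := by
  have hne : ∀ j, g j - g₀ ≠ 0 := fun j => sub_ne_zero.mpr (hg j)
  have hq1' : ∑ j, (q j : ℂ) = 0 := by exact_mod_cast congrArg (Complex.ofReal) hq1
  have key : ∀ i : Fin 3, ∑ j, (q j : ℂ) * wVec g₀ (g j) i = 0 := by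
    intro i
    fin_cases i
    · show ∑ j, (q j : ℂ) * wVec g₀ (g j) 0 = 0
      have h : ∀ j, (q j : ℂ) * wVec g₀ (g j) 0
          = (1 - g₀ ^ 2) * ((q j : ℂ) / (g j - g₀)) - g₀ * (q j : ℂ) := by
        intro j
        simp only [wVec, Pi.smul_apply, Matrix.cons_val_zero, smul_eq_mul]
        field_simp [hne j]
        ring
      simp only [h, Finset.sum_sub_distrib, ← Finset.mul_sum, hq2, hq1', mul_zero, sub_zero]
    · show ∑ j, (q j : ℂ) * wVec g₀ (g j) 1 = 0
      have h : ∀ j, (q j : ℂ) * wVec g₀ (g j) 1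
          = Complex.I * (1 + g₀ ^ 2) * ((q j : ℂ) / (g j - g₀)) + Complex.I * g₀ * (q j : ℂ) := by
        intro j
        simp only [wVec, Pi.smul_apply, Matrix.cons_val_one, Matrix.head_cons, Matrix.cons_val_zero, smul_eq_mul]
        field_simp [hne j]
        ring
      simp only [h, Finset.sum_add_distrib, ← Finset.mul_sum, hq2, hq1', mul_zero, add_zero]
    · show ∑ j, (q j : ℂ) * wVec g₀ (g j) 2 = 0
      have h : ∀ j, (q j : ℂ) * wVec g₀ (g j) 2
          = 2 * g₀ * ((q j : ℂ) / (g j - g₀)) + (q j : ℂ) := by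
        intro j
        have h2 : wVec g₀ (g j) 2 = (g j - g₀)⁻¹ * (g₀ + g j) := by
          simp [wVec]
        rw [h2]
        field_simp [hne j]
        ring
      simp only [h, Finset.sum_add_distrib, ← Finset.mul_sum, hq2, hq1', mul_zero, zero_add]
  constructor
  · -- closing up
    ext i
    have h1 : (∑ j, v j) i = ∑ j, (v j) i := by rw [WithLp.ofLp_sum, Finset.sum_apply]
    have hvi : ∀ j, (v j) i = q j * (wVec g₀ (g j) i).im := by
      intro j
      rw [hv j]
      fin_cases i <;> simp [imVec, e3, wVec]
    have h2 : ∑ j, (v j) i = (∑ j, (q j : ℂ) * wVec g₀ (g j) i).im := by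
      rw [Complex.im_sum]
      refine Finset.sum_congr rfl fun j _ => ?_
      rw [hvi j]
      simp [Complex.mul_im]
    rw [h1, h2, key i]
    simp
  · -- orthogonality
    intro j
    rw [hv j]
    have hinner : ∀ (a b : EuclideanSpace ℝ (Fin 3)),
        ⟪a, b⟫ = a 0 * b 0 + a 1 * b 1 + a 2 * b 2 := by
      intro a b
      simp [PiLp.inner_apply, Fin.sum_univ_three, mul_comm]
    rw [hinner]
    set a := g₀
    set b := g j
    have hk := ortho_key a b (b - a)⁻¹ (inv_mul_cancel₀ (hne j))
    have habs : ‖a‖ ^ 2 = a.re ^ 2 + a.im ^ 2 := by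
      rw [Complex.sq_norm, Complex.normSq_apply]; ring
    simp only [invStereo, imVec, wVec, e3, PiLp.smul_apply, smul_eq_mul,
      WithLp.equiv_symm_apply, PiLp.toLp_apply, Pi.smul_apply, Matrix.cons_val_zero, Matrix.cons_val_one,
      Matrix.head_cons, Matrix.cons_val_two, Matrix.tail_cons, habs]
    linear_combination (q j * (1 + a.re ^ 2 + a.im ^ 2)⁻¹) * hk
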